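/- For α ∈ (1,2), with weights w_k as above, the sum ∑_{k≥2} w_{k−1}/k! equals (α−1)/(2(α+1)). Consequently, setting p(k) = (2(1+α)α/(α²+α+2))·w_{k−1}/k! for k ≥ 2 and p(1) = 2(1+α)/(α²+α+2), one has ∑_{k≥1} p(k) = 1, i.e. p defines a probability distribution on the positive integers. -/

import Mathlib

noncomputable def marchalW (α : ℝ) : ℕ → ℝ
  | 0 => 1
  | 1 => 0
  | k => (α - 1) * ∏ j ∈ Finset.Ico 2 k, ((j : ℝ) - α)

/-- The degree distribution `D^(α)`:
`p 1 = 2(1+α)/(α²+α+2)` and `p k = (2(1+α)α/(α²+α+2)) · w_{k-1}/k!` for `k ≥ 2`. -/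
noncomputable def degreeDist (α : ℝ) (k : ℕ) : ℝ :=
  if k = 1 then 2 * (1 + α) / (α ^ 2 + α + 2)
  else if 2 ≤ k then
    (2 * (1 + α) * α / (α ^ 2 + α + 2)) * marchalW α (k - 1) / (Nat.factorial k : ℝ)
  else 0

lemma marchalW_add_two (α : ℝ) (k : ℕ) :
    marchalW α (k + 2) = (α - 1) * ∏ j ∈ Finset.Ico 2 (k + 2), ((j : ℝ) - α) := rfl

lemma prod_nonneg_aux (α : ℝ) (hα₂ : α < 2) (n : ℕ) :
    0 ≤ ∏ j ∈ Finset.Ico 2 n, ((j : ℝ) - α) := by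
  apply Finset.prod_nonneg
  intro j hj
  have h2 : 2 ≤ j := (Finset.mem_Ico.mp hj).1
  have : (2 : ℝ) ≤ (j : ℝ) := by exact_mod_cast h2
  linarith

lemma prod_le_fact (α : ℝ) (hα₁ : 1 < α) (hα₂ : α < 2) (n : ℕ) :
    ∏ j ∈ Finset.Ico 2 (n + 2), ((j : ℝ) - α) ≤ (Nat.factorial n : ℝ) := by
  induction n with
  | zero => simp
  | succ n ih =>
    rw [show n + 1 + 2 = (n + 2) + 1 from rfl, Finset.prod_Ico_succ_top (by omega)]
    have h1 : ((n + 2 : ℕ) : ℝ) - α ≤ ((n : ℝ) + 1) := by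
      push_cast; linarith
    have h2 : 0 ≤ ((n + 2 : ℕ) : ℝ) - α := by push_cast; linarith
    calc (∏ j ∈ Finset.Ico 2 (n + 2), ((j : ℝ) - α)) * (((n + 2 : ℕ) : ℝ) - α)
        ≤ (Nat.factorial n : ℝ) * ((n : ℝ) + 1) := by
          apply mul_le_mul ih h1 h2 (Nat.cast_nonneg _)
      _ = (Nat.factorial (n + 1) : ℝ) := by
          rw [Nat.factorial_succ]; push_cast; ring

/-- closed form of partial sums, for `N ≥ 1`. -/
lemma partial_sum_eq (α : ℝ) (hα₁ : 1 < α) (N : ℕ) :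
    ∑ k ∈ Finset.range (N + 1), marchalW α (k + 1) / (Nat.factorial (k + 2) : ℝ)
      = (α - 1) / (2 * (α + 1))
        - (α - 1) * (∏ j ∈ Finset.Ico 2 (N + 2), ((j : ℝ) - α))
            / ((α + 1) * (Nat.factorial (N + 2) : ℝ)) := by
  have hαne : α + 1 ≠ 0 := by linarith
  induction N with
  | zero =>
    simp only [zero_add, Finset.range_one, Finset.sum_singleton]
    show marchalW α 1 / _ = _
    rw [show marchalW α 1 = 0 from rfl, show Finset.Ico 2 2 = ∅ from rfl]
    rw [show (Nat.factorial 2 : ℝ) = 2 by norm_num [Nat.factorial]]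
    rw [Finset.prod_empty]
    field_simp
    ring
  | succ N ih =>
    rw [Finset.sum_range_succ, ih]
    have hW : marchalW α (N + 1 + 1) = (α - 1) * ∏ j ∈ Finset.Ico 2 (N + 2), ((j : ℝ) - α) :=
      marchalW_add_two α N
    rw [hW]
    have hprod : ∏ j ∈ Finset.Ico 2 (N + 3), ((j : ℝ) - α)
        = (∏ j ∈ Finset.Ico 2 (N + 2), ((j : ℝ) - α)) * (((N + 2 : ℕ) : ℝ) - α) := by
      rw [show N + 3 = (N + 2) + 1 from rfl, Finset.prod_Ico_succ_top (by omega)]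
    have hfact : (Nat.factorial (N + 3) : ℝ) = ((N : ℝ) + 3) * (Nat.factorial (N + 2) : ℝ) := by
      rw [show N + 3 = (N + 2) + 1 from rfl, Nat.factorial_succ]; push_cast; ring
    have hfne : (Nat.factorial (N + 2) : ℝ) ≠ 0 := by
      exact_mod_cast Nat.factorial_ne_zero (N + 2)
    rw [show N + 1 + 2 = N + 3 from rfl, hprod, hfact]
    have hN3 : ((N : ℝ) + 3) ≠ 0 := by positivity
    field_simp
    push_cast
    ring

lemma tendsto_partial_sums (α : ℝ) (hα₁ : 1 < α) (hα₂ : α < 2) :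
    Filter.Tendsto
      (fun N => ∑ k ∈ Finset.range N, marchalW α (k + 1) / (Nat.factorial (k + 2) : ℝ))
      Filter.atTop (nhds ((α - 1) / (2 * (α + 1)))) := by
  rw [← Filter.tendsto_add_atTop_iff_nat 1]
  have heq : ∀ N : ℕ,
      (∑ k ∈ Finset.range (N + 1), marchalW α (k + 1) / (Nat.factorial (k + 2) : ℝ))
        = (α - 1) / (2 * (α + 1))
          - (α - 1) * (∏ j ∈ Finset.Ico 2 (N + 2), ((j : ℝ) - α))
              / ((α + 1) * (Nat.factorial (N + 2) : ℝ)) :=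
    fun N => partial_sum_eq α hα₁ N
  simp only [heq]
  have h0 : Filter.Tendsto
      (fun N : ℕ => (α - 1) * (∏ j ∈ Finset.Ico 2 (N + 2), ((j : ℝ) - α))
          / ((α + 1) * (Nat.factorial (N + 2) : ℝ)))
      Filter.atTop (nhds 0) := by
    apply squeeze_zero
    · intro N
      have hp := prod_nonneg_aux α hα₂ (N + 2)
      have hf : (0:ℝ) < (Nat.factorial (N + 2) : ℝ) := by
        exact_mod_cast Nat.factorial_pos (N + 2)
      apply div_nonneg (mul_nonneg (by linarith) hp)
      apply mul_nonneg (by linarith) hf.le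
    · intro N
      show _ ≤ 1 / ((N : ℝ) + 1)
      have hf : (Nat.factorial (N + 2) : ℝ)
          = ((N : ℝ) + 2) * (((N : ℝ) + 1) * (Nat.factorial N : ℝ)) := by
        rw [show N + 2 = N + 1 + 1 from rfl, Nat.factorial_succ, Nat.factorial_succ]
        push_cast; ring
      have hfn : (0:ℝ) < (Nat.factorial N : ℝ) := by exact_mod_cast Nat.factorial_pos N
      have hple := prod_le_fact α hα₁ hα₂ N
      have hpnn := prod_nonneg_aux α hα₂ (N + 2)
      rw [div_le_div_iff₀ (by rw [hf]; positivity) (by positivity)]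
      rw [hf]
      have h1 : (α - 1) * (∏ j ∈ Finset.Ico 2 (N + 2), ((j : ℝ) - α))
          ≤ 1 * (Nat.factorial N : ℝ) := by
        apply mul_le_mul (by linarith) hple hpnn (by norm_num)
      have hX : (0:ℝ) < ((N : ℝ) + 1) * (Nat.factorial N : ℝ) := by positivity
      nlinarith [mul_le_mul_of_nonneg_right h1 (show (0:ℝ) ≤ (N : ℝ) + 1 by positivity),
        mul_nonneg hX.le (show (0:ℝ) ≤ (N : ℝ) by positivity),
        mul_nonneg hX.le (show (0:ℝ) ≤ α - 1 by linarith),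
        mul_nonneg (mul_nonneg hX.le (show (0:ℝ) ≤ (N : ℝ) by positivity)) (show (0:ℝ) ≤ α - 1 by linarith)]
    · exact tendsto_one_div_add_atTop_nhds_zero_nat
  have := Filter.Tendsto.const_sub ((α - 1) / (2 * (α + 1))) h0
  simpa using this

lemma hasSum_marchal (α : ℝ) (hα₁ : 1 < α) (hα₂ : α < 2) :
    HasSum (fun k : ℕ => marchalW α (k + 1) / (Nat.factorial (k + 2) : ℝ))
      ((α - 1) / (2 * (α + 1))) := by
  have hnn : ∀ k : ℕ, 0 ≤ marchalW α (k + 1) / (Nat.factorial (k + 2) : ℝ) := by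
    intro k
    have hf : (0:ℝ) < (Nat.factorial (k + 2) : ℝ) := by exact_mod_cast Nat.factorial_pos (k + 2)
    apply div_nonneg _ hf.le
    match k with
    | 0 => show (0:ℝ) ≤ marchalW α 1; simp [marchalW]
    | (n+1) =>
      rw [marchalW_add_two]
      have := prod_nonneg_aux α hα₂ (n + 2)
      nlinarith
  have hsum : Summable (fun k : ℕ => marchalW α (k + 1) / (Nat.factorial (k + 2) : ℝ)) := by
    apply summable_of_sum_range_le (c := (α - 1) / (2 * (α + 1))) hnn
    intro n
    rcases n with _ | N
    · simp
      apply div_nonneg (by linarith) (by linarith)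
    · rw [partial_sum_eq α hα₁ N]
      have hpnn := prod_nonneg_aux α hα₂ (N + 2)
      have hf : (0:ℝ) < (Nat.factorial (N + 2) : ℝ) := by
        exact_mod_cast Nat.factorial_pos (N + 2)
      have : 0 ≤ (α - 1) * (∏ j ∈ Finset.Ico 2 (N + 2), ((j : ℝ) - α))
          / ((α + 1) * (Nat.factorial (N + 2) : ℝ)) := by
        apply div_nonneg (mul_nonneg (by linarith) hpnn)
        apply mul_nonneg (by linarith) hf.le
      linarith
  have h1 := hsum.hasSum
  have h2 := h1.tendsto_sum_nat
  have h3 := tendsto_partial_sums α hα₁ hα₂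
  have := tendsto_nhds_unique h2 h3
  rwa [this] at h1

theorem degreeDist_isProbability (α : ℝ) (hα₁ : 1 < α) (hα₂ : α < 2) :
    (∑' k : ℕ, marchalW α (k + 1) / (Nat.factorial (k + 2) : ℝ) = (α - 1) / (2 * (α + 1))) ∧
    ∑' k : ℕ, degreeDist α k = 1 := by
  have hmain := hasSum_marchal α hα₁ hα₂
  have hD : α ^ 2 + α + 2 ≠ 0 := by nlinarith
  constructor
  · exact hmain.tsum_eq
  · set c : ℝ := 2 * (1 + α) * α / (α ^ 2 + α + 2) with hc
    have hshift : ∀ k : ℕ, degreeDist α (k + 2)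
        = c * (marchalW α (k + 1) / (Nat.factorial (k + 2) : ℝ)) := by
      intro k
      simp only [degreeDist]
      rw [if_neg (by omega), if_pos (by omega)]
      rw [show k + 2 - 1 = k + 1 from rfl]
      ring
    have h2 : HasSum (fun k : ℕ => degreeDist α (k + 2)) (c * ((α - 1) / (2 * (α + 1)))) := by
      have := hmain.mul_left c
      simpa only [← hshift] using this
    have hs1 : ∑ i ∈ Finset.range 1, degreeDist α (i + 1)
        = 2 * (1 + α) / (α ^ 2 + α + 2) := by simp [degreeDist]
    have h1 : HasSum (fun k : ℕ => degreeDist α (k + 1))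
        (c * ((α - 1) / (2 * (α + 1))) + 2 * (1 + α) / (α ^ 2 + α + 2)) := by
      have := (hasSum_nat_add_iff (f := fun k : ℕ => degreeDist α (k + 1)) 1).mp h2
      rwa [hs1] at this
    have hs0 : ∑ i ∈ Finset.range 1, degreeDist α i = 0 := by simp [degreeDist]
    have h0 : HasSum (degreeDist α)
        (c * ((α - 1) / (2 * (α + 1))) + 2 * (1 + α) / (α ^ 2 + α + 2) + 0) := by
      have := (hasSum_nat_add_iff (f := degreeDist α) 1).mp h1
      rwa [hs0] at this
    rw [h0.tsum_eq, hc]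
    have hα1 : α + 1 ≠ 0 := by linarith
    field_simp
    ring
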